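/- In the rally-point no-server model for a game to n points: as p → 0, the conditional moment generating function of the total number of rallies D given that A wins converges to m(t) = (∑_{k=0}^{n-1} e^{(n+k)t} C(n+k-1, k)) / (∑_{k=0}^{n-1} C(n+k-1, k)). The limiting conditional expectation equals 2n²/(n+1) and the limiting conditional variance equals 2n²(n-1)/((n+1)²(n+2)). -/

import Mathlib

open scoped BigOperators
open Filter

/-- Rally-point scoring: a trajectory is the list of rally winners (`true` = player A);
every rally scores a point for its winner, and the winner serves the next rally.
The first argument is the current server. -/
def rpWeight (pa pb : ℝ) : Bool → List Bool → ℝ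
  | _, [] => 1
  | srv, w :: rest =>
      (if srv then (if w then pa else 1 - pa) else (if w then 1 - pb else pb)) *
        rpWeight pa pb w rest

/-- Points scored by player A. -/
def rpScoreA (g : List Bool) : ℕ := g.count true

/-- Points scored by player B. -/
def rpScoreB (g : List Bool) : ℕ := g.count false

/-- A scores the last point. -/
def rpLastA (g : List Bool) : Prop := g.getLast? = some true

/-- B scores the last point. -/
def rpLastB (g : List Bool) : Prop := g.getLast? = some false

/-- Number of maximal runs of `false` in a list, the first argument being the previous value. -/
def falseRuns : Bool → List Bool → ℕ
  | _, [] => 0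
  | prev, b :: rest => (if prev && !b then 1 else 0) + falseRuns b rest

/-- Number of A-interruptions: maximal blocks of consecutive points scored by B. -/
def rpInter (g : List Bool) : ℕ := falseRuns true g

/-- Probability of a set of trajectories in the rally-point model, first server A. -/
noncomputable def rpPr (pa pb : ℝ) (E : Set (List Bool)) : ℝ :=
  ∑' g : List Bool, Set.indicator E (rpWeight pa pb true) g

/-- Conditional expectation of `f` given the event `E` in the rally-point model, first server A. -/
noncomputable def rpCondExp (pa pb : ℝ) (E : Set (List Bool)) (f : List Bool → ℝ) : ℝ :=
  (∑' g : List Bool, Set.indicator E (fun g => rpWeight pa pb true g * f g) g) / rpPr pa pb E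

/-- A complete rally-point game to `n` points: play stops as soon as a player reaches `n`. -/
def rpGame (n : ℕ) (g : List Bool) : Prop :=
  (rpScoreA g = n ∧ rpScoreB g < n ∨ rpScoreB g = n ∧ rpScoreA g < n) ∧
    ∀ l : List Bool, l <+: g → l ≠ g → rpScoreA l < n ∧ rpScoreB l < n
open Finset

def blists : ℕ → Finset (List Bool)
  | 0 => {[]}
  | m+1 => (blists m).image (List.cons true) ∪ (blists m).image (List.cons false)

lemma mem_blists : ∀ m (g : List Bool), g ∈ blists m ↔ g.length = m
  | 0, g => by cases g <;> simp [blists]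
  | m+1, [] => by simp [blists]
  | m+1, b :: l => by
      cases b <;> simp [blists, mem_blists m l, List.cons_injective.eq_iff]

lemma card_blists_filter : ∀ (m j : ℕ),
    ((blists m).filter (fun g => g.count true = j)).card = m.choose j
  | 0, 0 => by rw [blists]; rw [Finset.filter_singleton]; simp
  | 0, j+1 => by rw [blists]; rw [Finset.filter_singleton]; simp
  | m+1, j => by
      have hdisj : ∀ (s t : Finset (List Bool)), Disjoint (s.image (List.cons true))
          (t.image (List.cons false)) := by
        intro s t
        simp only [Finset.disjoint_left, Finset.mem_image]
        rintro a ⟨x, _, rfl⟩ ⟨y, _, h⟩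
        simp at h
      rw [blists, Finset.filter_union, Finset.filter_image, Finset.filter_image,
        Finset.card_union_of_disjoint (hdisj _ _),
        Finset.card_image_of_injective _ (List.cons_injective),
        Finset.card_image_of_injective _ (List.cons_injective)]
      cases j with
      | zero => simp [List.count_cons, card_blists_filter m 0]
      | succ j =>
          have h1 : (fun g : List Bool => (true :: g).count true = j+1) =
              (fun g => g.count true = j) := by
            funext g; simp [List.count_cons]
          have h2 : (fun g : List Bool => (false :: g).count true = j+1) =
              (fun g => g.count true = j+1) := by
            funext g; simp [List.count_cons]
          simp only [h1, h2, card_blists_filter m j, card_blists_filter m (j+1)]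
          rw [Nat.choose_succ_succ]

lemma rpW (p : ℝ) : ∀ (srv : Bool) (g : List Bool),
    rpWeight p (1-p) srv g = p ^ g.count true * (1-p) ^ g.count false
  | srv, [] => by simp [rpWeight]
  | srv, w :: rest => by
      rw [rpWeight, rpW p w rest]
      cases srv <;> cases w <;> simp [List.count_cons] <;> ring

lemma count_tf : ∀ (g : List Bool), g.count true + g.count false = g.length
  | [] => rfl
  | b :: l => by
      have := count_tf l
      cases b <;> simp [List.count_cons] <;> omega

/-- games won by A with B scoring exactly k points, game to m+1 -/
def wins (m k : ℕ) : Finset (List Bool) :=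
  ((blists (m+k)).filter (fun l => l.count true = m)).image (fun l => l ++ [true])

lemma mem_wins {m k : ℕ} {g : List Bool} :
    g ∈ wins m k ↔ ∃ l : List Bool, l.length = m + k ∧ l.count true = m ∧ g = l ++ [true] := by
  simp only [wins, Finset.mem_image, Finset.mem_filter, mem_blists]
  constructor
  · rintro ⟨l, ⟨h1, h2⟩, rfl⟩; exact ⟨l, h1, h2, rfl⟩
  · rintro ⟨l, h1, h2, rfl⟩; exact ⟨l, ⟨h1, h2⟩, rfl⟩

lemma card_wins (m k : ℕ) : (wins m k).card = (m+k).choose k := by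
  rw [wins, Finset.card_image_of_injective _ (fun a b h => by
    simpa using List.append_inj_left' h rfl), card_blists_filter]
  rw [← Nat.choose_symm (by omega : k ≤ m + k)]
  congr 1; omega

lemma wins_facts {m k : ℕ} {g : List Bool} (h : g ∈ wins m k) :
    g.count true = m + 1 ∧ g.count false = k ∧ g.length = m + 1 + k := by
  obtain ⟨l, h1, h2, rfl⟩ := mem_wins.1 h
  have h3 := count_tf l
  refine ⟨by simp [List.count_append, h2], by simp [List.count_append]; omega,
    by simp [h1]; omega⟩

lemma game_set_eq (m : ℕ) :
    {g : List Bool | rpGame (m+1) g ∧ rpScoreA g = m+1} =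
      ↑((Finset.range (m+1)).biUnion (wins m)) := by
  ext g
  simp only [Set.mem_setOf_eq, Finset.coe_biUnion, Finset.mem_range, Set.mem_iUnion,
    Finset.mem_coe, mem_wins]
  constructor
  · rintro ⟨⟨hdisj, hpre⟩, hA⟩
    have hB : rpScoreB g < m + 1 := by
      rcases hdisj with ⟨h1, h2⟩ | ⟨h1, h2⟩
      · exact h2
      · omega
    have hne : g ≠ [] := by
      intro h; rw [h] at hA; simp [rpScoreA] at hA
    have hdl : g.dropLast ++ [g.getLast hne] = g := List.dropLast_append_getLast hne
    have hdlne : g.dropLast ≠ g := by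
      intro h
      have h2 := congrArg List.length hdl
      rw [h] at h2
      simp at h2
    have hdlc := hpre g.dropLast (List.dropLast_prefix g) hdlne
    obtain ⟨b, hb⟩ : ∃ b, g.getLast hne = b := ⟨_, rfl⟩
    rw [hb] at hdl
    cases b with
    | false =>
        exfalso
        have h2 : rpScoreA g = rpScoreA g.dropLast := by
          unfold rpScoreA
          conv_lhs => rw [← hdl]
          simp [List.count_append]
        omega
    | true =>
        refine ⟨rpScoreB g, hB, g.dropLast, ?_, ?_, hdl.symm⟩
        · have h1 : g.dropLast.length + 1 = g.length := by
            have h0 := congrArg List.length hdl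
            simpa using h0
          have h2 := count_tf g
          have h3 : g.dropLast.count false = g.count false := by
            conv_rhs => rw [← hdl]
            simp [List.count_append]
          have h4 := count_tf g.dropLast
          unfold rpScoreA rpScoreB at *
          omega
        · have h3 : g.dropLast.count true + 1 = g.count true := by
            conv_rhs => rw [← hdl]
            simp [List.count_append]
          unfold rpScoreA at hA
          omega
  · rintro ⟨k, hk, l, hl, hc, rfl⟩
    have hcf : l.count false = k := by have := count_tf l; omega
    have hA : rpScoreA (l ++ [true]) = m + 1 := by
      unfold rpScoreA; simp [List.count_append, hc]
    have hBv : rpScoreB (l ++ [true]) = k := by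
      unfold rpScoreB; simp [List.count_append, hcf]
    refine ⟨⟨Or.inl ⟨hA, by omega⟩, ?_⟩, hA⟩
    intro l' hpre hne
    have hlen : l'.length ≤ l.length := by
      have h1 := hpre.length_le
      simp at h1
      rcases Nat.lt_or_ge l'.length (l.length + 1) with h | h
      · omega
      · exfalso; exact hne (hpre.eq_of_length (by simp; omega))
    have hpl : l' <+: l := by
      have h5 := List.prefix_iff_eq_take.1 hpre
      rw [List.take_append_of_le_length hlen] at h5
      exact h5 ▸ List.take_prefix _ _
    have hsub := hpl.sublist
    have c1 := hsub.count_le true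
    have c2 := hsub.count_le false
    unfold rpScoreA rpScoreB
    constructor <;> omega

lemma wins_disjoint (m : ℕ) : ∀ x ∈ (Finset.range (m+1) : Finset ℕ), ∀ y ∈ Finset.range (m+1),
    x ≠ y → Disjoint (wins m x) (wins m y) := by
  intro x _ y _ hxy
  simp only [Finset.disjoint_left]
  intro g hx hy
  exact hxy ((wins_facts hx).2.1 ▸ (wins_facts hy).2.1 ▸ rfl)

lemma tsum_formula (m : ℕ) (p : ℝ) (f : List Bool → ℝ) :
    ∑' g : List Bool, Set.indicator {g : List Bool | rpGame (m+1) g ∧ rpScoreA g = m+1}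
        (fun g => rpWeight p (1-p) true g * f g) g
      = ∑ k ∈ Finset.range (m+1), ∑ g ∈ wins m k, p^(m+1) * (1-p)^k * f g := by
  rw [tsum_eq_sum (s := (Finset.range (m+1)).biUnion (wins m))
    (fun g hg => Set.indicator_of_notMem (by rw [game_set_eq]; exact hg) _)]
  rw [Finset.sum_biUnion (wins_disjoint m)]
  refine Finset.sum_congr rfl fun k hk => Finset.sum_congr rfl fun g hg => ?_
  have hmem : g ∈ {g : List Bool | rpGame (m+1) g ∧ rpScoreA g = m+1} := by
    rw [game_set_eq]
    exact Finset.mem_coe.2 (Finset.mem_biUnion.2 ⟨k, hk, hg⟩)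
  obtain ⟨h1, h2, h3⟩ := wins_facts hg
  rw [Set.indicator_of_mem hmem, rpW p true g, h1, h2]

lemma condExp_formula (m : ℕ) {p : ℝ} (hp : p ≠ 0) (φ : ℕ → ℝ) :
    rpCondExp p (1-p) {g : List Bool | rpGame (m+1) g ∧ rpScoreA g = m+1}
        (fun g => φ g.length)
      = (∑ k ∈ Finset.range (m+1), ((m+k).choose k : ℝ) * (1-p)^k * φ (m+1+k)) /
        (∑ k ∈ Finset.range (m+1), ((m+k).choose k : ℝ) * (1-p)^k) := by
  have hnum : ∑' g : List Bool, Set.indicator {g : List Bool | rpGame (m+1) g ∧ rpScoreA g = m+1}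
      (fun g => rpWeight p (1-p) true g * φ g.length) g
      = p^(m+1) * ∑ k ∈ Finset.range (m+1), ((m+k).choose k : ℝ) * (1-p)^k * φ (m+1+k) := by
    rw [tsum_formula m p (fun g => φ g.length), Finset.mul_sum]
    refine Finset.sum_congr rfl fun k hk => ?_
    rw [Finset.sum_congr rfl (fun g hg => by rw [(wins_facts hg).2.2]),
      Finset.sum_const, card_wins, nsmul_eq_mul]
    ring
  have hden : rpPr p (1-p) {g : List Bool | rpGame (m+1) g ∧ rpScoreA g = m+1}
      = p^(m+1) * ∑ k ∈ Finset.range (m+1), ((m+k).choose k : ℝ) * (1-p)^k := by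
    unfold rpPr
    have := tsum_formula m p (fun _ => 1)
    simp only [mul_one] at this
    rw [this, Finset.mul_sum]
    refine Finset.sum_congr rfl fun k hk => ?_
    rw [Finset.sum_const, card_wins, nsmul_eq_mul]
    ring
  rw [rpCondExp, hnum, hden, mul_div_mul_left _ _ (pow_ne_zero _ hp)]

lemma hockey (r : ℕ) : ∀ j : ℕ, ∑ k ∈ Finset.range (j+1), (r+k).choose k = (r+j+1).choose j
  | 0 => by simp
  | j+1 => by
      rw [Finset.sum_range_succ, hockey r j, show r+(j+1) = r+j+1 from by ring]
      exact (Nat.choose_succ_succ _ _).symm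

lemma term1 (m k : ℕ) : (m+1+k) * (m+k).choose k = (m+1) * (m+1+k).choose k := by
  have e1 : (m+k).choose k = (m+k).choose m := by
    have h := Nat.choose_symm (show m ≤ m+k by omega)
    rw [show m+k-m = k from by omega] at h
    exact h.symm ▸ rfl
  have e2 : (m+1+k).choose k = (m+1+k).choose (m+1) := by
    have h := Nat.choose_symm (show m+1 ≤ m+1+k by omega)
    rw [show m+1+k-(m+1) = k from by omega] at h
    exact h.symm ▸ rfl
  have h1 := Nat.add_one_mul_choose_eq (m+k) m
  try simp only [Nat.succ_eq_add_one] at h1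
  rw [e1, e2, show m+1+k = m+k+1 from by omega, h1]
  exact Nat.mul_comm _ _

lemma sum0 (m : ℕ) : ∑ k ∈ Finset.range (m+1), (m+k).choose k = (2*m+1).choose m := by
  rw [hockey m m]; congr 1; omega

lemma sum1 (m : ℕ) : ∑ k ∈ Finset.range (m+1), (m+1+k) * (m+k).choose k
    = (m+1) * (2*m+2).choose m := by
  rw [Finset.sum_congr rfl fun k _ => term1 m k, ← Finset.mul_sum, hockey (m+1) m]
  congr 2; omega

lemma sum2 (m : ℕ) : ∑ k ∈ Finset.range (m+1), (m+1+k)^2 * (m+k).choose k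
    + (m+1) * (2*m+2).choose m = (m+1) * ((m+2) * (2*m+3).choose m) := by
  have key : ∀ k, (m+1+k)^2 * (m+k).choose k + (m+1) * (m+1+k).choose k
      = (m+1) * ((m+2) * (m+2+k).choose k) := by
    intro k
    have h1 := term1 m k
    have h2 := term1 (m+1) k
    rw [show m+1+1+k = m+2+k from by ring] at h2
    calc (m+1+k)^2 * (m+k).choose k + (m+1) * (m+1+k).choose k
        = (m+1+k) * ((m+1+k) * (m+k).choose k) + (m+1) * (m+1+k).choose k := by ring
      _ = (m+1+k) * ((m+1) * (m+1+k).choose k) + (m+1) * (m+1+k).choose k := by rw [h1]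
      _ = (m+1) * ((m+2+k) * (m+1+k).choose k) := by ring
      _ = (m+1) * ((m+2) * (m+2+k).choose k) := by rw [h2]
  have hA := hockey (m+1) m
  have hB := hockey (m+2) m
  rw [show (m+1)+m+1 = 2*m+2 from by ring] at hA
  rw [show (m+2)+m+1 = 2*m+3 from by ring] at hB
  calc ∑ k ∈ Finset.range (m+1), (m+1+k)^2 * (m+k).choose k + (m+1) * (2*m+2).choose m
      = ∑ k ∈ Finset.range (m+1), (m+1+k)^2 * (m+k).choose k
        + (m+1) * ∑ k ∈ Finset.range (m+1), (m+1+k).choose k := by rw [hA]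
    _ = ∑ k ∈ Finset.range (m+1), ((m+1+k)^2 * (m+k).choose k + (m+1) * (m+1+k).choose k) := by
        rw [Finset.mul_sum, Finset.sum_add_distrib]
    _ = ∑ k ∈ Finset.range (m+1), (m+1) * ((m+2) * (m+2+k).choose k) :=
        Finset.sum_congr rfl fun k _ => key k
    _ = (m+1) * ((m+2) * ∑ k ∈ Finset.range (m+1), (m+2+k).choose k) := by
        rw [← Finset.mul_sum, ← Finset.mul_sum]
    _ = (m+1) * ((m+2) * (2*m+3).choose m) := by rw [hB]

lemma ratio1 (m : ℕ) : (m+2) * (2*m+2).choose m = (2*m+2) * (2*m+1).choose m := by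
  have h1 := Nat.add_one_mul_choose_eq (2*m+1) m
  try simp only [Nat.succ_eq_add_one] at h1
  have h2 := Nat.choose_succ_right_eq (2*m+2) m
  rw [show 2*m+2-m = m+2 from by omega] at h2
  calc (m+2) * (2*m+2).choose m = (2*m+2).choose m * (m+2) := Nat.mul_comm _ _
    _ = (2*m+2).choose (m+1) * (m+1) := h2.symm
    _ = (2*m+1+1) * (2*m+1).choose m := h1.symm
    _ = (2*m+2) * (2*m+1).choose m := by rw [show 2*m+1+1 = 2*m+2 from by ring]

lemma ratio2 (m : ℕ) : (m+3) * (2*m+3).choose m = (2*m+3) * (2*m+2).choose m := by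
  have h1 := Nat.add_one_mul_choose_eq (2*m+2) m
  try simp only [Nat.succ_eq_add_one] at h1
  have h2 := Nat.choose_succ_right_eq (2*m+3) m
  rw [show 2*m+3-m = m+3 from by omega] at h2
  calc (m+3) * (2*m+3).choose m = (2*m+3).choose m * (m+3) := Nat.mul_comm _ _
    _ = (2*m+3).choose (m+1) * (m+1) := h2.symm
    _ = (2*m+2+1) * (2*m+2).choose m := h1.symm
    _ = (2*m+3) * (2*m+2).choose m := by rw [show 2*m+2+1 = 2*m+3 from by ring]

lemma tendsto_main (m : ℕ) (φ : ℕ → ℝ) :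
    Filter.Tendsto (fun p : ℝ => rpCondExp p (1-p)
        {g : List Bool | rpGame (m+1) g ∧ rpScoreA g = m+1} (fun g => φ g.length))
      (nhdsWithin (0:ℝ) (Set.Ioo (0:ℝ) 1))
      (nhds ((∑ k ∈ Finset.range (m+1), ((m+k).choose k : ℝ) * φ (m+1+k)) /
             (∑ k ∈ Finset.range (m+1), ((m+k).choose k : ℝ)))) := by
  have hN : Filter.Tendsto
      (fun p : ℝ => ∑ k ∈ Finset.range (m+1), ((m+k).choose k : ℝ) * (1-p)^k * φ (m+1+k))
      (nhds 0) (nhds (∑ k ∈ Finset.range (m+1), ((m+k).choose k : ℝ) * φ (m+1+k))) := by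
    refine tendsto_finset_sum _ fun k _ => ?_
    have : Continuous (fun p : ℝ => ((m+k).choose k : ℝ) * (1-p)^k * φ (m+1+k)) := by
      continuity
    refine this.tendsto' 0 _ (by norm_num)
  have hD : Filter.Tendsto
      (fun p : ℝ => ∑ k ∈ Finset.range (m+1), ((m+k).choose k : ℝ) * (1-p)^k)
      (nhds 0) (nhds (∑ k ∈ Finset.range (m+1), ((m+k).choose k : ℝ))) := by
    refine tendsto_finset_sum _ fun k _ => ?_
    have : Continuous (fun p : ℝ => ((m+k).choose k : ℝ) * (1-p)^k) := by continuity
    refine this.tendsto' 0 _ (by norm_num)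
  have hne : (∑ k ∈ Finset.range (m+1), ((m+k).choose k : ℝ)) ≠ 0 := by
    refine ne_of_gt (Finset.sum_pos' (fun i _ => by positivity) ⟨0, Finset.mem_range.2 (by omega),
      by simp⟩)
  refine Filter.Tendsto.congr'
    (eventually_nhdsWithin_of_forall fun p hp => (condExp_formula m (ne_of_gt hp.1) φ).symm)
    (((hN.mono_left nhdsWithin_le_nhds).div (hD.mono_left nhdsWithin_le_nhds) hne))

theorem stmt_18 (n : ℕ) (hn : 1 ≤ n) :
    (∀ t : ℝ,
      Tendsto (fun p : ℝ =>
          rpCondExp p (1 - p) {g : List Bool | rpGame n g ∧ rpScoreA g = n}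
            (fun g => Real.exp (t * (g.length : ℝ))))
        (nhdsWithin (0 : ℝ) (Set.Ioo (0 : ℝ) 1))
        (nhds ((∑ k ∈ Finset.range n, Real.exp (((n : ℝ) + k) * t) * ((n + k - 1).choose k : ℝ)) /
          (∑ k ∈ Finset.range n, ((n + k - 1).choose k : ℝ))))) ∧
    Tendsto (fun p : ℝ =>
        rpCondExp p (1 - p) {g : List Bool | rpGame n g ∧ rpScoreA g = n}
          (fun g => (g.length : ℝ)))
      (nhdsWithin (0 : ℝ) (Set.Ioo (0 : ℝ) 1)) (nhds (2 * (n : ℝ) ^ 2 / ((n : ℝ) + 1))) ∧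
    Tendsto (fun p : ℝ =>
        rpCondExp p (1 - p) {g : List Bool | rpGame n g ∧ rpScoreA g = n}
            (fun g => (g.length : ℝ) ^ 2) -
          (rpCondExp p (1 - p) {g : List Bool | rpGame n g ∧ rpScoreA g = n}
            (fun g => (g.length : ℝ))) ^ 2)
      (nhdsWithin (0 : ℝ) (Set.Ioo (0 : ℝ) 1))
      (nhds (2 * (n : ℝ) ^ 2 * ((n : ℝ) - 1) / (((n : ℝ) + 1) ^ 2 * ((n : ℝ) + 2)))) := by
  obtain ⟨m, rfl⟩ : ∃ m, n = m + 1 := ⟨n - 1, by omega⟩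
  -- cast facts
  have hC0 : (0:ℝ) < ((2*m+1).choose m : ℝ) := by
    exact_mod_cast Nat.choose_pos (by omega : m ≤ 2*m+1)
  have hCne : ((2*m+1).choose m : ℝ) ≠ 0 := ne_of_gt hC0
  have hR1 : ((m:ℝ)+2) * ((2*m+2).choose m : ℝ) = (2*(m:ℝ)+2) * ((2*m+1).choose m : ℝ) := by
    exact_mod_cast ratio1 m
  have hR2 : ((m:ℝ)+3) * ((2*m+3).choose m : ℝ) = (2*(m:ℝ)+3) * ((2*m+2).choose m : ℝ) := by
    exact_mod_cast ratio2 m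
  have hBval : ((2*m+2).choose m : ℝ) = (2*(m:ℝ)+2) * ((2*m+1).choose m : ℝ) / ((m:ℝ)+2) := by
    rw [eq_div_iff (by positivity)]
    linarith [hR1]
  have hAval : ((2*m+3).choose m : ℝ)
      = (2*(m:ℝ)+3) * ((2*m+2).choose m : ℝ) / ((m:ℝ)+3) := by
    rw [eq_div_iff (by positivity)]
    linarith [hR2]
  have hS0 : (∑ k ∈ Finset.range (m+1), ((m+k).choose k : ℝ)) = ((2*m+1).choose m : ℝ) := by
    rw [← Nat.cast_sum, sum0]
  have hS1 : (∑ k ∈ Finset.range (m+1), ((m+k).choose k : ℝ) * ((m+1+k : ℕ) : ℝ))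
      = ((m:ℝ)+1) * ((2*m+2).choose m : ℝ) := by
    have h1 : (∑ k ∈ Finset.range (m+1), ((m+k).choose k : ℝ) * ((m+1+k : ℕ) : ℝ))
        = ((∑ k ∈ Finset.range (m+1), (m+1+k) * (m+k).choose k : ℕ) : ℝ) := by
      push_cast
      exact Finset.sum_congr rfl fun k _ => by ring
    rw [h1, sum1]
    push_cast
    ring
  have hS2 : (∑ k ∈ Finset.range (m+1), ((m+k).choose k : ℝ) * ((m+1+k : ℕ) : ℝ)^2)
      = ((m:ℝ)+1) * (((m:ℝ)+2) * ((2*m+3).choose m : ℝ)) - ((m:ℝ)+1) * ((2*m+2).choose m : ℝ) := by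
    have h1 : (∑ k ∈ Finset.range (m+1), ((m+k).choose k : ℝ) * ((m+1+k : ℕ) : ℝ)^2)
        = ((∑ k ∈ Finset.range (m+1), (m+1+k)^2 * (m+k).choose k : ℕ) : ℝ) := by
      push_cast
      exact Finset.sum_congr rfl fun k _ => by ring
    have h2 := sum2 m
    have h3 : ((∑ k ∈ Finset.range (m+1), (m+1+k)^2 * (m+k).choose k : ℕ) : ℝ)
        + ((m:ℝ)+1) * ((2*m+2).choose m : ℝ) = ((m:ℝ)+1) * (((m:ℝ)+2) * ((2*m+3).choose m : ℝ)) := by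
      exact_mod_cast h2
    rw [h1]
    linarith [h3]
  refine ⟨?_, ?_, ?_⟩
  · -- MGF
    intro t
    have h := tendsto_main m (fun j => Real.exp (t * (j : ℝ)))
    have e1 : (∑ k ∈ Finset.range (m+1),
          Real.exp ((((m+1 : ℕ) : ℝ) + (k : ℝ)) * t) * (((m+1) + k - 1).choose k : ℝ))
        = ∑ k ∈ Finset.range (m+1), ((m+k).choose k : ℝ) * Real.exp (t * ((m+1+k : ℕ) : ℝ)) := by
      refine Finset.sum_congr rfl fun k _ => ?_
      rw [show m+1+k-1 = m+k from by omega, mul_comm]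
      congr 1
      push_cast
      ring
    have e2 : (∑ k ∈ Finset.range (m+1), (((m+1) + k - 1).choose k : ℝ))
        = ∑ k ∈ Finset.range (m+1), ((m+k).choose k : ℝ) := by
      refine Finset.sum_congr rfl fun k _ => ?_
      rw [show m+1+k-1 = m+k from by omega]
    rw [e1, e2]
    exact h
  · -- mean
    have h := tendsto_main m (fun j => (j : ℝ))
    have key : (∑ k ∈ Finset.range (m+1), ((m+k).choose k : ℝ) * ((m+1+k : ℕ) : ℝ)) /
        (∑ k ∈ Finset.range (m+1), ((m+k).choose k : ℝ))
        = 2 * ((m+1 : ℕ) : ℝ)^2 / (((m+1 : ℕ) : ℝ) + 1) := by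
      rw [hS0, hS1, hBval]
      push_cast
      rw [div_eq_div_iff (by positivity) (by positivity)]
      field_simp
      ring
    rw [← key]
    exact h
  · -- variance
    have h2 := tendsto_main m (fun j => (j : ℝ)^2)
    have h1 := tendsto_main m (fun j => (j : ℝ))
    have h := h2.sub (h1.pow 2)
    have key : (∑ k ∈ Finset.range (m+1), ((m+k).choose k : ℝ) * ((m+1+k : ℕ) : ℝ)^2) /
          (∑ k ∈ Finset.range (m+1), ((m+k).choose k : ℝ))
        - ((∑ k ∈ Finset.range (m+1), ((m+k).choose k : ℝ) * ((m+1+k : ℕ) : ℝ)) /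
          (∑ k ∈ Finset.range (m+1), ((m+k).choose k : ℝ)))^2
        = 2 * ((m+1 : ℕ) : ℝ)^2 * (((m+1 : ℕ) : ℝ) - 1) /
          ((((m+1 : ℕ) : ℝ) + 1)^2 * (((m+1 : ℕ) : ℝ) + 2)) := by
      rw [hS0, hS1, hS2, hAval, hBval]
      push_cast
      field_simp
      ring
    rw [← key]
    exact h
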